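/- Let κ and κ' be cardinals with κ infinite and κ ≥ 2^{κ'}. Then any functor from the category of pointed sets of cardinality at most κ to the category of pointed sets of cardinality at most κ' is isomorphic to a constant functor. -/

import Mathlib

open CategoryTheory Cardinal

universe u

namespace Stmt8Aux

/-- The zero morphism in `Pointed`. -/
def zmor (A B : Pointed.{u}) : A ⟶ B := ⟨fun _ => B.point, rfl⟩

lemma homCard (A B : Pointed.{u}) : #(A ⟶ B) ≤ #B.X ^ #A.X := by
  have hinj : Function.Injective (fun f : A ⟶ B => f.toFun) := fun f g hfg => Pointed.Hom.ext hfg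
  rw [power_def]
  exact mk_le_of_injective hinj

end Stmt8Aux

open Stmt8Aux

theorem stmt_8 (κ κ' : Cardinal.{u}) (hκ : Cardinal.aleph0 ≤ κ) (h : 2 ^ κ' ≤ κ)
    (F : ObjectProperty.FullSubcategory (fun X : Pointed.{u} => Cardinal.mk X.X ≤ κ) ⥤
         ObjectProperty.FullSubcategory (fun X : Pointed.{u} => Cardinal.mk X.X ≤ κ')) :
    ∃ d, Nonempty (F ≅
      (Functor.const (ObjectProperty.FullSubcategory (fun X : Pointed.{u} => Cardinal.mk X.X ≤ κ))).obj d) := by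
  classical
  set C := ObjectProperty.FullSubcategory (fun X : Pointed.{u} => Cardinal.mk X.X ≤ κ) with hC
  -- the one-point object
  let pt : C := ⟨Pointed.of PUnit.unit, by
    simpa using (one_le_aleph0.trans hκ)⟩
  -- κ' is at least 1
  have hκ'pos : κ' ≠ 0 := by
    intro h0
    have h1 : #((F.obj pt).obj.X) ≤ 0 := h0 ▸ (F.obj pt).property
    rw [le_zero_iff, mk_eq_zero_iff] at h1
    exact h1.false (F.obj pt).obj.point
  have hκ'κ : κ' ^ κ' ≤ κ := by
    rcases lt_or_ge κ' ℵ₀ with h' | h'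
    · exact (power_lt_aleph0 h' h').le.trans hκ
    · rw [power_self_eq h']; exact h
  -- key: F sends the zero endomorphism to the identity
  have key : ∀ A : C, F.map (ObjectProperty.homMk (zmor A.obj A.obj) : A ⟶ A) = 𝟙 (F.obj A) := by
    intro A
    set X := A.obj with hX
    let ι := κ.out
    have hι : #ι = κ := mk_out κ
    -- the wedge of κ copies of X
    let Wc : Type u := Option (ι × {x : X.X // x ≠ X.point})
    have hWc : #Wc ≤ κ := by
      have h1 : #({x : X.X // x ≠ X.point}) ≤ κ := (mk_subtype_le _).trans A.property
      have h2 : #(ι × {x : X.X // x ≠ X.point}) ≤ κ := by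
        have hp : #(ι × {x : X.X // x ≠ X.point}) = #ι * #({x : X.X // x ≠ X.point}) := by
          rw [mk_prod]; simp
        rw [hp, ← mul_eq_self hκ]
        exact mul_le_mul' hι.le h1
      calc #Wc = #(ι × {x : X.X // x ≠ X.point}) + 1 := mk_option
      _ ≤ κ + 1 := add_le_add_left h2 1
      _ = κ := add_one_eq hκ
    let W : C := ⟨Pointed.of (none : Wc), hWc⟩
    -- inclusions and collapse maps
    let emb : ι → (A ⟶ W) := fun i =>
      ⟨fun x => if hx : x = X.point then none else some (i, ⟨x, hx⟩), dif_pos rfl⟩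
    let χ : Set ι → (W ⟶ A) := fun S =>
      ⟨fun w => w.elim X.point (fun p => if p.1 ∈ S then p.2.1 else X.point), rfl⟩
    have hcomp_mem : ∀ (S : Set ι) (i : ι), i ∈ S → emb i ≫ χ S = 𝟙 A := by
      intro S i hi
      apply ObjectProperty.hom_ext
      show (emb i).hom ≫ (χ S).hom = 𝟙 X
      apply Pointed.Hom.ext
      funext x
      by_cases hx : x = X.point <;>
        simp [emb, χ, CategoryStruct.comp, Pointed.Hom.comp, CategoryStruct.id, Pointed.Hom.id,
          hx, hi]
    have hcomp_not : ∀ (S : Set ι) (i : ι), i ∉ S → emb i ≫ χ S = ObjectProperty.homMk (zmor X X) := by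
      intro S i hi
      apply ObjectProperty.hom_ext
      show (emb i).hom ≫ (χ S).hom = zmor X X
      apply Pointed.Hom.ext
      funext x
      by_cases hx : x = X.point <;>
        simp [emb, χ, zmor, ObjectProperty.homMk, CategoryStruct.comp, Pointed.Hom.comp, hx, hi]
    -- pigeonhole
    have hninj : ¬ Function.Injective (fun S : Set ι => F.map (χ S)) := by
      intro hinj
      have h1 : #(Set ι) ≤ #(F.obj W ⟶ F.obj A) := mk_le_of_injective hinj
      have h2 : #(F.obj W ⟶ F.obj A) ≤ κ' ^ κ' := by
        refine (mk_le_of_injective (f := fun g : F.obj W ⟶ F.obj A => g.hom) (fun g g' hg => ObjectProperty.hom_ext _ hg)).trans ((homCard _ _).trans ?_)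
        calc #((F.obj A).obj.X) ^ #((F.obj W).obj.X)
            ≤ κ' ^ #((F.obj W).obj.X) := power_le_power_right (F.obj A).property
          _ ≤ κ' ^ κ' := power_le_power_left hκ'pos (F.obj W).property
      rw [mk_set, hι] at h1
      exact absurd (h1.trans (h2.trans hκ'κ)) (cantor κ).not_ge
    rw [Function.not_injective_iff] at hninj
    obtain ⟨S, T, hST, hne⟩ := hninj
    have : ∃ i, (i ∈ S ∧ i ∉ T) ∨ (i ∈ T ∧ i ∉ S) := by
      by_contra hc
      push_neg at hc
      exact hne (Set.ext fun i => ⟨(hc i).1, (hc i).2⟩)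
    obtain ⟨i, hi | hi⟩ := this
    · calc F.map (ObjectProperty.homMk (zmor X X) : A ⟶ A) = F.map (emb i ≫ χ T) := by rw [hcomp_not T i hi.2]
        _ = F.map (emb i) ≫ F.map (χ T) := F.map_comp _ _
        _ = F.map (emb i) ≫ F.map (χ S) := by rw [hST]
        _ = F.map (emb i ≫ χ S) := (F.map_comp _ _).symm
        _ = F.map (𝟙 A) := by rw [hcomp_mem S i hi.1]
        _ = 𝟙 (F.obj A) := F.map_id A
    · calc F.map (ObjectProperty.homMk (zmor X X) : A ⟶ A) = F.map (emb i ≫ χ S) := by rw [hcomp_not S i hi.2]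
        _ = F.map (emb i) ≫ F.map (χ S) := F.map_comp _ _
        _ = F.map (emb i) ≫ F.map (χ T) := by rw [hST]
        _ = F.map (emb i ≫ χ T) := (F.map_comp _ _).symm
        _ = F.map (𝟙 A) := by rw [hcomp_mem T i hi.1]
        _ = 𝟙 (F.obj A) := F.map_id A
  -- build the natural isomorphism to the constant functor at F.obj pt
  refine ⟨F.obj pt, ⟨NatIso.ofComponents (fun A => ?_) (fun {A B} f => ?_)⟩⟩
  · exact
      { hom := F.map (⟨fun _ => PUnit.unit, rfl⟩ : A ⟶ pt)
        inv := F.map (⟨fun _ => A.obj.point, rfl⟩ : pt ⟶ A)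
        hom_inv_id := by
          rw [← F.map_comp]
          have : ((⟨fun _ => PUnit.unit, rfl⟩ : A ⟶ pt) ≫ ⟨fun _ => A.obj.point, rfl⟩ : A ⟶ A)
              = ObjectProperty.homMk (zmor A.obj A.obj) := by
            apply ObjectProperty.hom_ext; apply Pointed.Hom.ext; rfl
          rw [this, key A]
        inv_hom_id := by
          rw [← F.map_comp]
          have : ((⟨fun _ => A.obj.point, rfl⟩ : pt ⟶ A) ≫ ⟨fun _ => PUnit.unit, rfl⟩ : pt ⟶ pt)
              = 𝟙 pt := by
            apply ObjectProperty.hom_ext; apply Pointed.Hom.ext; rfl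
          rw [this, F.map_id]
          rfl }
  · have heq : (f ≫ (⟨fun _ => PUnit.unit, rfl⟩ : B ⟶ pt) : A ⟶ pt)
        = (⟨fun _ => PUnit.unit, rfl⟩ : A ⟶ pt) := by
      apply ObjectProperty.hom_ext; apply Pointed.Hom.ext; rfl
    show F.map f ≫ F.map _ = F.map _ ≫ _
    rw [← F.map_comp, heq, Functor.const_obj_map, Category.comp_id]
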